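/- arXiv:0807.2303 — 5 statements merged into one kernel-verified Lean document; each statement's English description precedes it below -/
import Mathlib

section
/- Every finite word w contains at most |w| + 1 distinct palindromic factors (where the empty word counts as a palindromic factor). -/
/-- The finset of (distinct) palindromic factors of a finite word `w`,
including the empty word. -/
def palFactors {A : Type*} [DecidableEq A] (w : List A) : Finset (List A) :=
  ((w.inits.flatMap List.tails).filter (fun u => u.reverse = u)).toFinset

lemma exists_concat_of_ne_nil' {A : Type*} {l : List A} (h : l ≠ []) :
    ∃ l' a, l = l' ++ [a] := by
  induction l using List.reverseRecOn with
  | nil => simp at h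
  | append_singleton l' a _ => exact ⟨l', a, rfl⟩

lemma mem_palFactors {A : Type*} [DecidableEq A] {w u : List A} :
    u ∈ palFactors w ↔ u <:+: w ∧ u.reverse = u := by
  simp only [palFactors, List.mem_toFinset, List.mem_filter, List.mem_flatMap,
    List.mem_inits, List.mem_tails, decide_eq_true_eq]
  constructor
  · rintro ⟨⟨l, hl, hu⟩, hp⟩
    exact ⟨hu.isInfix.trans hl.isInfix, hp⟩
  · rintro ⟨⟨s, t, hst⟩, hp⟩
    exact ⟨⟨s ++ u, ⟨t, by simpa using hst⟩, ⟨s, rfl⟩⟩, hp⟩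

/-- Every finite word `w` contains at most `|w| + 1` distinct palindromic factors. -/
theorem pal_factors_card_le {A : Type*} [DecidableEq A] (w : List A) :
    (palFactors w).card ≤ w.length + 1 := by
  induction w using List.reverseRecOn with
  | nil =>
    have : palFactors ([] : List A) ⊆ {[]} := by
      intro u hu
      rw [mem_palFactors] at hu
      simpa using List.eq_nil_of_infix_nil hu.1
    simpa using (Finset.card_le_card this).trans (by simp)
  | append_singleton w a ih =>
    -- the set of palindromic suffixes of w ++ [a]
    set v := w ++ [a] with hv
    have hS : ((palFactors v).filter (fun u => u <:+ v)).Nonempty := by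
      refine ⟨[a], ?_⟩
      simp [Finset.mem_filter, mem_palFactors]
      exact ⟨(List.suffix_append w [a]).isInfix, List.suffix_append w [a]⟩
    obtain ⟨P, hP, hPmax⟩ := Finset.exists_max_image _ (fun u => u.length) hS
    rw [Finset.mem_filter, mem_palFactors] at hP
    obtain ⟨⟨hPinf, hPpal⟩, hPsuf⟩ := hP
    have key : palFactors v ⊆ insert P (palFactors w) := by
      intro u hu
      have hu' := hu
      rw [mem_palFactors] at hu'
      obtain ⟨⟨s, t, hst⟩, hpal⟩ := hu'
      rcases eq_or_ne t [] with rfl | ht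
      · -- u is a palindromic suffix of v
        have husuf : u <:+ v := ⟨s, by simpa using hst⟩
        have hulen : u.length ≤ P.length := by
          refine hPmax u ?_
          rw [Finset.mem_filter, mem_palFactors]
          exact ⟨⟨husuf.isInfix, hpal⟩, husuf⟩
        have huP : u <:+ P := List.suffix_of_suffix_length_le husuf hPsuf hulen
        have huPpre : u <+: P := by
          rw [← List.reverse_prefix] at *
          rwa [hpal, hPpal] at huP
        rcases eq_or_ne u P with rfl | hne
        · exact Finset.mem_insert_self _ _
        · -- u is a proper prefix of P, P a suffix of v, so u is an infix of w
          obtain ⟨r, hr⟩ := huPpre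
          obtain ⟨q, hq⟩ := hPsuf
          have hrne : r ≠ [] := by
            rintro rfl
            exact hne (by simpa using hr)
          obtain ⟨r', b, rfl⟩ := exists_concat_of_ne_nil' hrne
          have : q ++ u ++ r' ++ [b] = w ++ [a] := by
            rw [← hv, ← hq, ← hr]; simp
          have hw : q ++ u ++ r' = w := by
            have := List.append_inj_left' this rfl
            simpa using this
          refine Finset.mem_insert_of_mem ?_
          rw [mem_palFactors]
          exact ⟨⟨q, r', by simpa using hw⟩, hpal⟩
      · -- t nonempty: u is an infix of w
        obtain ⟨t', b, rfl⟩ := exists_concat_of_ne_nil' ht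
        have : s ++ u ++ t' ++ [b] = w ++ [a] := by
          rw [← hv, ← hst]; simp
        have hw : s ++ u ++ t' = w := by
          have := List.append_inj_left' this rfl
          simpa using this
        refine Finset.mem_insert_of_mem ?_
        rw [mem_palFactors]
        exact ⟨⟨s, t', by simpa using hw⟩, hpal⟩
    calc (palFactors v).card ≤ (insert P (palFactors w)).card := Finset.card_le_card key
      _ ≤ (palFactors w).card + 1 := Finset.card_insert_le _ _
      _ ≤ (w.length + 1) + 1 := by omega
      _ = v.length + 1 := by simp [hv]
end

section
/- Let w be a finite rich word. If u and v are factors of w having the same longest palindromic prefix and the same longest palindromic suffix, then u = v. -/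
set_option linter.unusedSectionVars false


/-- A finite word `w` is rich if it has exactly `|w| + 1` distinct palindromic factors. -/
def Rich {A : Type*} [DecidableEq A] (w : List A) : Prop :=
  (palFactors w).card = w.length + 1

/-- `p` is the longest palindromic prefix of `u`. -/
def LongestPalPrefix {A : Type*} (p u : List A) : Prop :=
  p <+: u ∧ p.reverse = p ∧ ∀ p' : List A, p' <+: u → p'.reverse = p' → p'.length ≤ p.length

/-- `q` is the longest palindromic suffix of `u`. -/
def LongestPalSuffix {A : Type*} (q u : List A) : Prop :=
  q <:+ u ∧ q.reverse = q ∧ ∀ q' : List A, q' <:+ u → q'.reverse = q' → q'.length ≤ q.length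


namespace RichAux

open List

variable {A : Type*} [DecidableEq A]

lemma mem_palFactors {w x : List A} : x ∈ palFactors w ↔ x <:+: w ∧ x.reverse = x := by
  simp only [palFactors, List.mem_toFinset, List.mem_filter, List.mem_flatMap,
    List.mem_inits, List.mem_tails, decide_eq_true_eq]
  constructor
  · rintro ⟨⟨l, hl, hx⟩, hp⟩
    exact ⟨List.IsInfix.trans (List.IsSuffix.isInfix hx) (List.IsPrefix.isInfix hl), hp⟩
  · rintro ⟨⟨s, t, hst⟩, hp⟩
    exact ⟨⟨s ++ x, ⟨t, by simp [← hst]⟩, suffix_append s x⟩, hp⟩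

lemma pal_mem_palFactors {w x : List A} (h : x <:+: w) (hp : x.reverse = x) :
    x ∈ palFactors w := mem_palFactors.2 ⟨h, hp⟩

/-- suffix of suffix by length -/
lemma suffix_of_suffix_len_le {z t₁ t₂ : List A} (h1 : t₁ <:+ z) (h2 : t₂ <:+ z)
    (h : t₁.length ≤ t₂.length) : t₁ <:+ t₂ := by
  rw [← List.reverse_prefix] at h1 h2 ⊢
  exact List.prefix_of_prefix_length_le h1 h2 (by simpa using h)

lemma eq_of_suffix_of_length_eq {z t₁ t₂ : List A} (h1 : t₁ <:+ z) (h2 : t₂ <:+ z)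
    (h : t₁.length = t₂.length) : t₁ = t₂ :=
  (suffix_of_suffix_len_le h1 h2 h.le).eq_of_length h

lemma eq_of_prefix_of_length_eq {z t₁ t₂ : List A} (h1 : t₁ <+: z) (h2 : t₂ <+: z)
    (h : t₁.length = t₂.length) : t₁ = t₂ :=
  (List.prefix_of_prefix_length_le h1 h2 h.le).eq_of_length h

/-- a palindromic suffix of a palindrome is a prefix -/
lemma pal_prefix_of_pal_suffix {s t : List A} (hs : s.reverse = s) (ht : t.reverse = t)
    (h : s <:+ t) : s <+: t := by
  rw [← List.reverse_prefix] at h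
  rwa [hs, ht] at h

lemma exists_lps (z : List A) : ∃ t, LongestPalSuffix t z := by
  induction z with
  | nil => exact ⟨[], suffix_rfl, rfl, fun p' h _ => by simp [List.suffix_nil.1 h]⟩
  | cons a z ih =>
    by_cases hp : (a :: z).reverse = a :: z
    · exact ⟨a :: z, suffix_rfl, hp, fun p' h _ => h.length_le⟩
    · obtain ⟨t, ht1, ht2, ht3⟩ := ih
      refine ⟨t, ht1.trans (z.suffix_cons a), ht2, fun q' hq' hq'p => ?_⟩
      rcases hq' with ⟨c, hc⟩
      cases c with
      | nil =>
        simp only [List.nil_append] at hc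
        exact absurd (hc ▸ hq'p) hp
      | cons b c => exact ht3 q' ⟨c, by injection hc⟩ hq'p

lemma lps_unique {z t t' : List A} (h : LongestPalSuffix t z) (h' : LongestPalSuffix t' z) :
    t = t' :=
  eq_of_suffix_of_length_eq h.1 h'.1
    (le_antisymm (h'.2.2 t h.1 h.2.1) (h.2.2 t' h'.1 h'.2.1))

lemma lps_rev_of_lpp {z p : List A} (h : LongestPalPrefix p z) :
    LongestPalSuffix p z.reverse := by
  obtain ⟨h1, h2, h3⟩ := h
  refine ⟨by rw [← h2]; exact h1.reverse, h2, fun q' hq' hq'p => ?_⟩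
  have : q'.reverse <+: z := by
    have := hq'.reverse; rwa [List.reverse_reverse] at this
  simpa using h3 q'.reverse this (by rw [List.reverse_reverse, hq'p])

lemma lpp_rev_of_lps {z q : List A} (h : LongestPalSuffix q z) :
    LongestPalPrefix q z.reverse := by
  obtain ⟨h1, h2, h3⟩ := h
  refine ⟨by rw [← h2]; exact h1.reverse, h2, fun p' hp' hp'p => ?_⟩
  have : p'.reverse <:+ z := by
    have := hp'.reverse; rwa [List.reverse_reverse] at this
  simpa using h3 p'.reverse this (by rw [List.reverse_reverse, hp'p])

lemma infix_dropLast_of_decomp {z x B A' : List A} (h : z = A' ++ x ++ B) (hB : B ≠ []) :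
    x <:+: z.dropLast := by
  subst h
  rw [List.append_assoc, List.dropLast_append_of_ne_nil (by simp [hB]),
    List.dropLast_append_of_ne_nil hB]
  exact ⟨A', B.dropLast, by simp⟩

/-- every palindromic factor of z is a factor of dropLast z or equals the lps of z -/
lemma palFactors_mem_cases {z t : List A} (ht : LongestPalSuffix t z) :
    ∀ x ∈ palFactors z, x ∈ palFactors z.dropLast ∨ x = t := by
  intro x hx
  rw [mem_palFactors] at hx
  obtain ⟨⟨A', B, hAB⟩, hxp⟩ := hx
  rcases eq_or_ne B [] with hB | hB
  · -- x is a suffix of z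
    subst hB
    have hsuf : x <:+ z := ⟨A', by simpa using hAB⟩
    have hlen : x.length ≤ t.length := ht.2.2 x hsuf hxp
    have hxt : x <:+ t := suffix_of_suffix_len_le hsuf ht.1 hlen
    rcases eq_or_ne x t with h | h
    · exact Or.inr h
    · left
      have hpre : x <+: t := pal_prefix_of_pal_suffix hxp ht.2.1 hxt
      obtain ⟨c, hc⟩ := hpre
      have hc' : c ≠ [] := by
        rintro rfl
        exact h (by simpa using hc)
      obtain ⟨D, hD⟩ := ht.1
      exact pal_mem_palFactors (infix_dropLast_of_decomp (z := z) (by rw [← hD, ← hc, List.append_assoc]) hc') hxp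
  · exact Or.inl (pal_mem_palFactors (infix_dropLast_of_decomp hAB.symm hB) hxp)

lemma palFactors_nil : palFactors ([] : List A) = {[]} := by
  ext x
  simp [mem_palFactors]
  rintro rfl; rfl

lemma palFactors_mono {z w : List A} (h : z <:+: w) : palFactors z ⊆ palFactors w := by
  intro x hx
  rw [mem_palFactors] at hx ⊢
  exact ⟨hx.1.trans h, hx.2⟩

lemma palFactors_subset_insert {z t : List A} (ht : LongestPalSuffix t z) :
    palFactors z ⊆ insert t (palFactors z.dropLast) := by
  intro x hx
  rcases palFactors_mem_cases ht x hx with h | h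
  · exact Finset.mem_insert_of_mem h
  · exact h ▸ Finset.mem_insert_self _ _

lemma card_palFactors_le (z : List A) : (palFactors z).card ≤ z.length + 1 := by
  induction z using List.reverseRecOn with
  | nil => simp [palFactors_nil]
  | append_singleton z a ih =>
    obtain ⟨t, ht⟩ := exists_lps (z ++ [a])
    calc (palFactors (z ++ [a])).card
        ≤ (insert t (palFactors (z ++ [a]).dropLast)).card :=
          Finset.card_le_card (palFactors_subset_insert ht)
      _ ≤ (palFactors (z ++ [a]).dropLast).card + 1 := Finset.card_insert_le _ _
      _ = (palFactors z).card + 1 := by rw [List.dropLast_concat]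
      _ ≤ z.length + 1 + 1 := by omega
      _ = (z ++ [a]).length + 1 := by simp

lemma rich_concat_elim {z : List A} {a : A} (h : Rich (z ++ [a])) :
    Rich z ∧ ∀ t, LongestPalSuffix t (z ++ [a]) → t ∉ palFactors z := by
  have hle := card_palFactors_le z
  obtain ⟨t₀, ht₀⟩ := exists_lps (z ++ [a])
  have hsub := palFactors_subset_insert ht₀
  rw [List.dropLast_concat] at hsub
  have hcard : (palFactors (z ++ [a])).card = z.length + 2 := by
    rw [h]; simp
  have h1 : z.length + 2 ≤ (palFactors z).card + 1 :=
    hcard ▸ (Finset.card_le_card hsub).trans (Finset.card_insert_le _ _)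
  have hz : Rich z := le_antisymm hle (by omega)
  refine ⟨hz, fun t ht htz => ?_⟩
  have : t = t₀ := lps_unique ht ht₀
  subst this
  have : palFactors (z ++ [a]) ⊆ palFactors z := by
    intro x hx
    rcases Finset.mem_insert.1 (hsub hx) with h | h
    · exact h ▸ htz
    · exact h
  have := Finset.card_le_card this
  rw [hcard, hz] at this
  omega

lemma rich_prefix {w x : List A} (hw : Rich w) (h : x <+: w) : Rich x := by
  induction w using List.reverseRecOn with
  | nil => rwa [List.prefix_nil.1 h]
  | append_singleton z a ih =>
    rcases eq_or_ne x (z ++ [a]) with rfl | hne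
    · exact hw
    · have hxz : x <+: z := by
        have hlen : x.length ≤ z.length := by
          have h1 := h.length_le
          simp at h1
          rcases Nat.lt_or_ge x.length (z.length + 1) with h2 | h2
          · omega
          · exfalso
            exact hne (h.eq_of_length (by simp; omega))
        have : x = (z ++ [a]).take x.length := prefix_iff_eq_take.1 h
        rw [List.take_append_of_le_length hlen] at this
        exact this ▸ z.take_prefix x.length
      exact ih (rich_concat_elim hw).1 hxz

lemma rich_dropLast {w : List A} (hw : Rich w) : Rich w.dropLast :=
  rich_prefix hw w.dropLast_prefix

/-- unioccurrence of the longest palindromic suffix in a rich word -/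
lemma lps_unioccurrent {z t A' B : List A} (hz : Rich z) (ht : LongestPalSuffix t z)
    (h : z = A' ++ t ++ B) : B = [] := by
  by_contra hB
  obtain ⟨B', b, hB'⟩ := (List.eq_nil_or_concat B).resolve_left hB
  rw [List.concat_eq_append] at hB'
  subst hB'
  have hzdecomp : z = (A' ++ t ++ B') ++ [b] := by rw [h]; simp
  have h2 := rich_concat_elim (hzdecomp ▸ hz)
  have := h2.2 t (hzdecomp ▸ ht)
  exact this (pal_mem_palFactors ⟨A', B', by simp⟩ ht.2.1)

lemma palFactors_reverse (w : List A) : palFactors w.reverse = palFactors w := by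
  ext x
  simp only [mem_palFactors]
  constructor
  · rintro ⟨hx, hp⟩
    have h2 : x.reverse <:+: w.reverse := hp.symm ▸ hx
    exact ⟨List.reverse_infix.1 h2, hp⟩
  · rintro ⟨hx, hp⟩
    have h2 : x.reverse <:+: w.reverse := List.reverse_infix.2 hx
    exact ⟨hp ▸ h2, hp⟩

lemma rich_reverse {w : List A} (hw : Rich w) : Rich w.reverse := by
  unfold Rich at hw ⊢
  rwa [palFactors_reverse, List.length_reverse]

lemma rich_suffix {w x : List A} (hw : Rich w) (h : x <:+ w) : Rich x := by
  have : x.reverse <+: w.reverse := by rwa [List.reverse_prefix]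
  have := rich_prefix (rich_reverse hw) this
  have := rich_reverse this
  rwa [List.reverse_reverse] at this

lemma rich_infix {w x : List A} (hw : Rich w) (h : x <:+: w) : Rich x := by
  obtain ⟨s, t, hst⟩ := h
  exact rich_prefix (rich_suffix hw ⟨s, by rw [← hst, List.append_assoc]⟩) (prefix_append x t)

/-- unioccurrence of the longest palindromic prefix in a rich word -/
lemma lpp_unioccurrent {z p A' B : List A} (hz : Rich z) (hp : LongestPalPrefix p z)
    (h : z = A' ++ p ++ B) : A' = [] := by
  have h1 : z.reverse = B.reverse ++ p ++ A'.reverse := by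
    rw [h]; simp [hp.2.1]
  have := lps_unioccurrent (rich_reverse hz) (lps_rev_of_lpp hp) h1
  simpa using this

/-- In a rich word, every complete return to a palindromic factor is a palindrome. -/
theorem returns_palindrome : ∀ (n : ℕ) (w : List A), w.length ≤ n → Rich w →
    ∀ s r : List A, s.reverse = s → s <+: r → s <:+ r →
    (∀ α β, r = α ++ s ++ β → α = [] ∨ β = []) → r <:+: w → r.reverse = r := by
  intro n
  induction n using Nat.strong_induction_on with
  | _ n IH =>
    intro w hwn hw s r hs hpref hsuf htwo hrw
    obtain ⟨A', B, hAB⟩ := hrw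
    rcases eq_or_ne B [] with rfl | hB
    case inr =>
      -- r occurs not at the end: pass to dropLast
      have hne : w ≠ [] := by rintro rfl; simp at hAB; tauto
      have hlen : w.length - 1 < n := by
        have : 1 ≤ w.length := List.length_pos_iff.2 hne
        omega
      exact IH (w.length - 1) hlen w.dropLast (by simp) (rich_dropLast hw) s r hs hpref hsuf
        htwo (infix_dropLast_of_decomp hAB.symm hB)
    -- now B = [], r is a suffix of w
    simp only [List.append_nil] at hAB
    have hrsuf : r <:+ w := ⟨A', hAB⟩
    rcases eq_or_ne s r with rfl | hsne
    · exact hs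
    have hslt : s.length < r.length :=
      lt_of_le_of_ne hpref.length_le (fun h => hsne (hpref.eq_of_length h))
    have hrne : r ≠ [] := by rintro rfl; simp at hslt
    have hwne : w ≠ [] := by rintro rfl; exact hrne (List.suffix_nil.1 hrsuf)
    obtain ⟨t, ht⟩ := exists_lps w
    have hst : s.length ≤ t.length := ht.2.2 s (hsuf.trans hrsuf) hs
    rcases lt_trichotomy t.length r.length with hlt | heq | hgt
    · -- t shorter than r : contradiction
      exfalso
      have htr : t <:+ r := suffix_of_suffix_len_le ht.1 hrsuf hlt.le
      have hstt : s <:+ t := suffix_of_suffix_len_le hsuf htr hst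
      obtain ⟨c, hc⟩ := htr
      obtain ⟨d, hd⟩ := pal_prefix_of_pal_suffix hs ht.2.1 hstt
      have hr2 : r = c ++ s ++ d := by rw [← hc, ← hd, List.append_assoc]
      rcases htwo c d hr2 with hc0 | hd0
      · subst hc0
        simp only [List.nil_append] at hc
        rw [hc] at hlt
        exact lt_irrefl _ hlt
      · subst hd0
        simp only [List.append_nil] at hd
        subst hd
        obtain ⟨e, he⟩ := hpref
        have he' : e ≠ [] := by rintro rfl; simp at he; exact hsne he
        have := lps_unioccurrent hw ht (by rw [← hAB, ← he, List.append_assoc] )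
        exact he' this
    · exact (eq_of_suffix_of_length_eq ht.1 hrsuf heq) ▸ ht.2.1
    · -- t longer than r : mirror r and recurse on dropLast
      have hrt : r <:+ t := suffix_of_suffix_len_le hrsuf ht.1 hgt.le
      obtain ⟨c, hc⟩ := hrt
      have hcne : c ≠ [] := by
        rintro rfl; simp at hc; subst hc; omega
      have htrev : t = r.reverse ++ c.reverse := by
        conv_lhs => rw [← ht.2.1, ← hc]
        simp
      obtain ⟨D, hD⟩ := ht.1
      have hwdec : w = D ++ r.reverse ++ c.reverse := by
        rw [← hD, htrev, List.append_assoc]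
      have hrrinf : r.reverse <:+: w.dropLast :=
        infix_dropLast_of_decomp hwdec (by simp [hcne])
      have hp1 : s <+: r.reverse := by
        obtain ⟨f, hf⟩ := hsuf
        exact ⟨f.reverse, by rw [← hf]; simp [hs]⟩
      have hp2 : s <:+ r.reverse := by
        obtain ⟨e, he⟩ := hpref
        exact ⟨e.reverse, by rw [← he]; simp [hs]⟩
      have htwo' : ∀ α β, r.reverse = α ++ s ++ β → α = [] ∨ β = [] := by
        intro α β h
        have : r = β.reverse ++ s ++ α.reverse := by
          rw [← List.reverse_reverse r, h]; simp [hs]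
        rcases htwo _ _ this with h1 | h1
        · right; simpa using h1
        · left; simpa using h1
      have hlen : w.length - 1 < n := by
        have : 1 ≤ w.length := List.length_pos_iff.2 hwne
        omega
      have := IH (w.length - 1) hlen w.dropLast (by simp) (rich_dropLast hw) s r.reverse hs
        hp1 hp2 htwo' hrrinf
      rw [List.reverse_reverse] at this
      exact this.symm

lemma lpp_ne_nil {u p : List A} (h : LongestPalPrefix p u) (hu : u ≠ []) : p ≠ [] := by
  cases u with
  | nil => exact absurd rfl hu
  | cons a u' =>
    have := h.2.2 [a] ⟨u', rfl⟩ rfl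
    intro hp; rw [hp] at this; simp at this

lemma lpp_self {u p : List A} (hup : u.reverse = u) (h : LongestPalPrefix p u) : p = u :=
  h.1.eq_of_length (le_antisymm h.1.length_le (h.2.2 u List.prefix_rfl hup))

lemma lps_self {u q : List A} (hup : u.reverse = u) (h : LongestPalSuffix q u) : q = u :=
  h.1.eq_of_length (le_antisymm h.1.length_le (h.2.2 u List.suffix_rfl hup))

lemma prefix_of_prefix_append {p x y : List A} (h : p <+: x ++ y) (hl : p.length ≤ x.length) :
    p <+: x := by
  have h1 : p = (x ++ y).take p.length := List.prefix_iff_eq_take.1 h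
  rw [List.take_append_of_le_length hl] at h1
  exact h1 ▸ x.take_prefix p.length

/-- if `u` is a factor of `v` and both have the same longest palindromic
prefix and suffix, with everything inside a rich word, then `u = v`. -/
lemma eq_of_infix_pair {w u v p q : List A} (hw : Rich w) (huv : u <:+: v) (hvw : v <:+: w)
    (hpu : LongestPalPrefix p u) (hpv : LongestPalPrefix p v)
    (hqu : LongestPalSuffix q u) (hqv : LongestPalSuffix q v) : u = v := by
  have hv : Rich v := rich_infix hw hvw
  obtain ⟨C, D, hCD⟩ := huv
  obtain ⟨u₁, hu₁⟩ := hpu.1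
  have hC : C = [] := lpp_unioccurrent (A' := C) (B := u₁ ++ D) hv hpv
    (by rw [← hCD, ← hu₁]; simp)
  subst hC
  simp only [List.nil_append] at hCD
  obtain ⟨u₂, hu₂⟩ := hqu.1
  have hD : D = [] := lps_unioccurrent (A' := u₂) (B := D) hv hqv
    (by rw [← hCD, ← hu₂]; try simp)
  subst hD
  simpa using hCD

lemma infix_tail_of_decomp {z x B A' : List A} (h : z = A' ++ x ++ B) (hA : A' ≠ []) :
    x <:+: z.tail := by
  cases A' with
  | nil => exact absurd rfl hA
  | cons a A'' =>
    subst h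
    exact ⟨A'', B, by simp⟩

theorem key : ∀ (n : ℕ) (w : List A), w.length ≤ n → Rich w →
    ∀ u v p q : List A, u <:+: w → v <:+: w →
    LongestPalPrefix p u → LongestPalPrefix p v →
    LongestPalSuffix q u → LongestPalSuffix q v → u = v := by
  intro n
  induction n using Nat.strong_induction_on with
  | _ n IH =>
    intro w hwn hw u v p q hu hv hpu hpv hqu hqv
    classical
    obtain ⟨a₁, b₁, h₁⟩ := hu
    obtain ⟨a₂, b₂, h₂⟩ := hv
    have core : ∀ u v a₁ b₁ a₂ b₂ : List A,
        a₁ ++ u ++ b₁ = w → a₂ ++ v ++ b₂ = w →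
        LongestPalPrefix p u → LongestPalPrefix p v →
        LongestPalSuffix q u → LongestPalSuffix q v →
        a₁.length ≤ a₂.length → u = v := by
      clear h₁ h₂ hpu hpv hqu hqv a₁ b₁ a₂ b₂ u v
      intro u v a₁ b₁ a₂ b₂ h₁ h₂ hpu hpv hqu hqv hle
      have hu : u <:+: w := ⟨a₁, b₁, h₁⟩
      have hv : v <:+: w := ⟨a₂, b₂, h₂⟩
      -- empty cases
      rcases eq_or_ne u [] with rfl | hune
      · have hp : p = [] := List.prefix_nil.1 hpu.1
        subst hp
        rcases eq_or_ne v [] with rfl | hvne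
        · rfl
        · exact absurd rfl (lpp_ne_nil hpv hvne)
      rcases eq_or_ne v [] with rfl | hvne
      · exact absurd (List.prefix_nil.1 hpv.1) (lpp_ne_nil hpu hune)
      have huRich : Rich u := rich_infix hw hu
      have hvRich : Rich v := rich_infix hw hv
      -- prefixes and suffixes of w
      have ha₁ : a₁ <+: w := ⟨u ++ b₁, by rw [← h₁]; simp⟩
      have ha₂ : a₂ <+: w := ⟨v ++ b₂, by rw [← h₂]; simp⟩
      have hb₁ : b₁ <:+ w := ⟨a₁ ++ u, by rw [← h₁]; try simp⟩
      have hb₂ : b₂ <:+ w := ⟨a₂ ++ v, by rw [← h₂]; try simp⟩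
      rcases le_or_gt b₁.length b₂.length with hble | hblt
      · -- v is a factor of u
        obtain ⟨c, hc⟩ := List.prefix_of_prefix_length_le ha₁ ha₂ hle
        obtain ⟨d, hd⟩ := suffix_of_suffix_len_le hb₁ hb₂ hble
        have heq : a₁ ++ (u ++ b₁) = a₁ ++ (c ++ v ++ d ++ b₁) := by
          rw [← List.append_assoc, h₁, ← h₂, ← hc, ← hd]
          simp
        have h4 : u = c ++ v ++ d :=
          List.append_cancel_right (List.append_cancel_left heq)
        exact (eq_of_infix_pair hw ⟨c, d, h4.symm⟩ hu hpv hpu hqv hqu).symm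
      rcases eq_or_lt_of_le hle with haeq | halt
      · -- same starting position : u is a prefix of v
        have ha : a₁ = a₂ := eq_of_prefix_of_length_eq ha₁ ha₂ haeq
        subst ha
        have hub : u ++ b₁ = v ++ b₂ := by
          apply List.append_cancel_left (as := a₁)
          rw [← List.append_assoc, ← List.append_assoc, h₁, h₂]
        have hulen : u.length ≤ v.length := by
          have := congrArg List.length hub
          simp at this
          omega
        have : u <+: v := List.prefix_of_prefix_length_le
          ⟨b₁, hub⟩ (List.prefix_append v b₂) hulen
        exact eq_of_infix_pair hw this.isInfix hv hpu hpv hqu hqv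
      -- now a₁.length < a₂.length and b₂.length < b₁.length
      have hwne : w ≠ [] := by rintro rfl; simp at h₁; tauto
      have hwpos : 1 ≤ w.length := List.length_pos_iff.2 hwne
      have hmlt : w.length - 1 < n := by omega
      rcases eq_or_ne a₁ [] with rfl | ha₁ne
      case inr =>
        -- move to the tail of w
        have ha₂ne : a₂ ≠ [] := by
          intro h; rw [h] at halt; simp at halt
        refine IH (w.length - 1) hmlt w.tail (by simp) (rich_suffix hw w.tail_suffix)
          u v p q ?_ ?_ hpu hpv hqu hqv
        · exact infix_tail_of_decomp h₁.symm ha₁ne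
        · exact infix_tail_of_decomp h₂.symm ha₂ne
      rcases eq_or_ne b₂ [] with rfl | hb₂ne
      case inr =>
        have hb₁ne : b₁ ≠ [] := by
          intro h; rw [h] at hblt; simp at hblt
        refine IH (w.length - 1) hmlt w.dropLast (by simp) (rich_dropLast hw)
          u v p q ?_ ?_ hpu hpv hqu hqv
        · exact infix_dropLast_of_decomp h₁.symm hb₁ne
        · exact infix_dropLast_of_decomp h₂.symm hb₂ne
      -- now u is a prefix of w and v is a suffix of w
      simp only [List.nil_append, List.append_nil] at h₁ h₂ halt hblt
      -- palindromic shortcut cases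
      rcases eq_or_ne u.reverse u with hupal | hunp
      · have hp : p = u := lpp_self hupal hpu
        have hq : q = u := lps_self hupal hqu
        obtain ⟨C, hC⟩ := hqv.1
        have : C = [] := lpp_unioccurrent (A' := C) (B := ([] : List A)) hvRich hpv (by rw [hp, ← hq, ← hC]; simp)
        subst this
        simp only [List.nil_append] at hC
        rw [← hC, hq]
      rcases eq_or_ne v.reverse v with hvpal | hvnp
      · have hp : p = v := lpp_self hvpal hpv
        have hq : q = v := lps_self hvpal hqv
        obtain ⟨D, hD⟩ := hpu.1
        have : D = [] := lps_unioccurrent (A' := ([] : List A)) (B := D) huRich hqu (by rw [hq, ← hp, ← hD]; simp)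
        subst this
        rw [← hp]
        simpa using hD.symm
      -- main case: u is a proper prefix of w, v a proper suffix, neither a palindrome
      have hpune : p ≠ u := fun h => hunp (h ▸ hpu.2.1)
      have hpvne : p ≠ v := fun h => hvnp (h ▸ hpv.2.1)
      have hqune : q ≠ u := fun h => hunp (h ▸ hqu.2.1)
      have hplu : p.length < u.length :=
        lt_of_le_of_ne hpu.1.length_le (fun h => hpune (hpu.1.eq_of_length h))
      have hplv : p.length < v.length :=
        lt_of_le_of_ne hpv.1.length_le (fun h => hpvne (hpv.1.eq_of_length h))
      have hqlu : q.length < u.length :=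
        lt_of_le_of_ne hqu.1.length_le (fun h => hqune (hqu.1.eq_of_length h))
      have ha₂pos : 0 < a₂.length := by simpa using halt
      have hb₁pos : 0 < b₁.length := by simpa using hblt
      have hwlen : w.length = a₂.length + v.length := by rw [← h₂]; simp
      have hwlen1 : w.length = u.length + b₁.length := by rw [← h₁]; simp
      -- the first occurrence of p at a positive position
      have hex : ∃ k, 0 < k ∧ p <+: w.drop k := by
        refine ⟨a₂.length, ha₂pos, ?_⟩
        rw [← h₂, List.drop_left]
        exact hpv.1
      have hkle : Nat.find hex ≤ a₂.length :=
        Nat.find_min' hex ⟨ha₂pos, by rw [← h₂, List.drop_left]; exact hpv.1⟩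
      obtain ⟨hkpos, hkp⟩ := Nat.find_spec hex
      set k := Nat.find hex with hk
      -- this occurrence ends beyond the end of u
      have hku : u.length < k + p.length := by
        by_contra hcon
        push_neg at hcon
        have hkleu : k ≤ u.length := by omega
        have hdw : w.drop k = u.drop k ++ b₁ := by
          rw [← h₁, List.drop_append_of_le_length hkleu]
        have hpdu : p <+: u.drop k := by
          apply prefix_of_prefix_append (y := b₁) (hdw ▸ hkp)
          rw [List.length_drop]; omega
        obtain ⟨c, hcc⟩ := hpdu
        have hudec : u = u.take k ++ p ++ c := by
          rw [List.append_assoc, hcc, List.take_append_drop]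
        have h0 := lpp_unioccurrent (A' := u.take k) (B := c) huRich hpu hudec
        have h0' := congrArg List.length h0
        simp only [List.length_take, List.length_nil] at h0'
        omega
      have hkn : k + p.length < w.length := by
        calc k + p.length ≤ a₂.length + p.length := by omega
          _ < a₂.length + v.length := by omega
          _ = w.length := hwlen.symm
      -- r is the complete return to p from position 0 to position k
      set r := w.take (k + p.length) with hr
      have hrlen : r.length = k + p.length := by
        rw [hr, List.length_take]; omega
      have hpw : p <+: w := hpu.1.trans ⟨b₁, h₁⟩
      have hpr : p <+: r := by
        have hh : r.take p.length = p := by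
          rw [hr, List.take_take, min_eq_left (by omega)]
          exact (List.prefix_iff_eq_take.1 hpw).symm
        exact hh ▸ r.take_prefix p.length
      have hpsr : p <:+ r := by
        refine ⟨w.take k, ?_⟩
        rw [hr, List.take_add]
        congr 1
        exact List.prefix_iff_eq_take.1 hkp
      have htwo : ∀ α β, r = α ++ p ++ β → α = [] ∨ β = [] := by
        intro α β hαβ
        by_contra hcon
        push_neg at hcon
        obtain ⟨hα, hβ⟩ := hcon
        have hlen : α.length + p.length + β.length = k + p.length := by
          have hl := congrArg List.length hαβ
          rw [hrlen] at hl
          simp at hl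
          omega
        have hβpos : 0 < β.length := List.length_pos_iff.2 hβ
        have hαpos : 0 < α.length := List.length_pos_iff.2 hα
        have hwdec : w = α ++ (p ++ (β ++ w.drop (k + p.length))) := by
          conv_lhs => rw [← List.take_append_drop (k + p.length) w]
          rw [← hr, hαβ]
          simp
        have hPα : 0 < α.length ∧ p <+: w.drop α.length := by
          refine ⟨hαpos, ?_⟩
          rw [hwdec, List.drop_left]
          exact List.prefix_append p _
        exact Nat.find_min hex (by omega : α.length < k) hPα
      have hrinf : r <:+: w := (w.take_prefix (k + p.length)).isInfix
      have hrpal : r.reverse = r :=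
        returns_palindrome w.length w le_rfl hw p r hpu.2.1 hpr hpsr htwo hrinf
      -- u is a proper prefix of the palindrome r
      have hur : u <+: r := by
        have hul : u = w.take u.length := by
          rw [← h₁, List.take_left]
        have hh : r.take u.length = u := by
          rw [hr, List.take_take, min_eq_left (by omega)]
          exact hul.symm
        exact hh ▸ r.take_prefix u.length
      obtain ⟨f, hf⟩ := hur
      have hfne : f ≠ [] := by
        rintro rfl
        simp only [List.append_nil] at hf
        have := congrArg List.length hf
        rw [hrlen] at this
        omega
      have hwr : w = r ++ w.drop (k + p.length) := by
        conv_lhs => rw [← List.take_append_drop (k + p.length) w]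
      have hdne : w.drop (k + p.length) ≠ [] := by
        intro h
        have hh : (w.drop (k + p.length)).length = w.length - (k + p.length) :=
          List.length_drop
        rw [h] at hh
        simp at hh
        omega
      have hrrev : r = f.reverse ++ u.reverse := by
        rw [← hrpal, ← hf]
        simp
      have hurev_infix : u.reverse <:+: w.dropLast :=
        infix_dropLast_of_decomp (z := w) (A' := f.reverse) (B := w.drop (k + p.length))
          (by conv_lhs => rw [hwr, hrrev]) hdne
      -- v is a proper suffix of the palindrome t = lps(w)
      obtain ⟨t, htw⟩ := exists_lps w
      have hvw' : v <:+ w := ⟨a₂, h₂⟩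
      have hvt : v.length < t.length := by
        by_contra hcon
        push_neg at hcon
        have htv : t <:+ v := suffix_of_suffix_len_le htw.1 hvw' hcon
        have hl1 : t.length ≤ q.length := hqv.2.2 t htv htw.2.1
        have hl2 : q.length ≤ t.length := htw.2.2 q (hqv.1.trans hvw') hqv.2.1
        have htq : t = q := eq_of_suffix_of_length_eq htw.1 (hqv.1.trans hvw') (by omega)
        obtain ⟨u₂, hu₂⟩ := hqu.1
        have hb0 : b₁ = [] := lps_unioccurrent (A' := u₂) (B := b₁) hw htw
          (by rw [htq, ← h₁, ← hu₂]; try simp)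
        rw [hb0] at hb₁pos
        simp at hb₁pos
      obtain ⟨g, hg⟩ := htw.1
      have hvt' : v <:+ t := suffix_of_suffix_len_le hvw' htw.1 (by omega)
      obtain ⟨e, he⟩ := hvt'
      have hene : e ≠ [] := by
        rintro rfl
        simp only [List.nil_append] at he
        rw [he] at hvt
        omega
      have htrev : t = v.reverse ++ e.reverse := by
        rw [← htw.2.1, ← he]
        simp
      have hvrev_infix : v.reverse <:+: w.dropLast :=
        infix_dropLast_of_decomp (z := w) (A' := g) (B := e.reverse)
          (by rw [← hg, htrev, List.append_assoc]) (by simp [hene])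
      -- conclude by induction on the shorter word dropLast w
      have hfin := IH (w.length - 1) hmlt w.dropLast (by simp) (rich_dropLast hw)
        u.reverse v.reverse q p hurev_infix hvrev_infix
        (lpp_rev_of_lps hqu) (lpp_rev_of_lps hqv) (lps_rev_of_lpp hpu) (lps_rev_of_lpp hpv)
      exact List.reverse_injective hfin
    rcases le_total a₁.length a₂.length with h | h
    · exact core u v a₁ b₁ a₂ b₂ h₁ h₂ hpu hpv hqu hqv h
    · exact (core v u a₂ b₂ a₁ b₁ h₂ h₁ hpv hpu hqv hqu h).symm


end RichAux

open RichAux in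
/-- If `u` and `v` are factors of a finite rich word `w` having the same longest
palindromic prefix and the same longest palindromic suffix, then `u = v`. -/
theorem factors_eq_of_same_longest_pal_prefix_suffix {A : Type*} [DecidableEq A]
    (w u v p q : List A) (hw : Rich w) (hu : u <:+: w) (hv : v <:+: w)
    (hpu : LongestPalPrefix p u) (hpv : LongestPalPrefix p v)
    (hqu : LongestPalSuffix q u) (hqv : LongestPalSuffix q v) :
    u = v := by
  exact key w.length w le_rfl hw u v p q hu hv hpu hpv hqu hqv
end

section
/- A finite word w is rich if and only if each factor of w is uniquely determined by its longest palindromic prefix and its longest palindromic suffix; that is, w is rich if and only if any two factors u and v of w having the same longest palindromic prefix and the same longest palindromic suffix are equal. -/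
set_option linter.unusedSectionVars false

namespace RichProof
open List

variable {A : Type*} [DecidableEq A]

/-- suffix of a common list: shorter is suffix of longer -/
theorem suffix_of_suffix_length_le {a b l : List A} (ha : a <:+ l) (hb : b <:+ l)
    (h : a.length ≤ b.length) : a <:+ b := by
  rw [← List.reverse_prefix] at *
  exact List.prefix_of_prefix_length_le ha hb (by simpa using h)

/-- a palindromic prefix of a palindrome is a suffix -/
theorem pal_prefix_suffix {s t : List A} (hs : s.reverse = s) (ht : t.reverse = t)
    (h : s <+: t) : s <:+ t := by
  rw [← List.reverse_suffix] at h
  rwa [hs, ht] at h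

theorem pal_suffix_prefix {s t : List A} (hs : s.reverse = s) (ht : t.reverse = t)
    (h : s <:+ t) : s <+: t := by
  rw [← List.reverse_prefix] at h
  rwa [hs, ht] at h

/-- longest palindromic suffix -/
def lps : List A → List A
  | [] => []
  | a :: z => if (a :: z).reverse = a :: z then a :: z else lps z

@[simp] theorem lps_nil : lps ([] : List A) = [] := rfl

theorem lps_suffix (z : List A) : lps z <:+ z := by
  induction z with
  | nil => exact List.suffix_refl _
  | cons a z ih =>
    rw [lps]
    split
    · exact List.suffix_refl _
    · exact ih.trans (List.suffix_cons a z)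

theorem lps_pal (z : List A) : (lps z).reverse = lps z := by
  induction z with
  | nil => rfl
  | cons a z ih =>
    rw [lps]
    split
    · assumption
    · exact ih

theorem lps_longest {t : List A} (z : List A) (hsuf : t <:+ z) (hpal : t.reverse = t) :
    t.length ≤ (lps z).length := by
  induction z with
  | nil => simpa using List.IsSuffix.length_le hsuf
  | cons a z ih =>
    rw [lps]
    split
    · exact hsuf.length_le
    · rcases List.suffix_cons_iff.1 hsuf with h | h
      · subst h; exact absurd hpal (by assumption)
      · exact ih h

theorem lps_eq_of_pal {z : List A} (h : z.reverse = z) : lps z = z := by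
  have h1 := lps_longest z (List.suffix_refl z) h
  exact (lps_suffix z).eq_of_length (le_antisymm ((lps_suffix z).length_le) h1)

theorem lps_ne_nil {z : List A} (h : z ≠ []) : lps z ≠ [] := by
  induction z with
  | nil => exact absurd rfl h
  | cons a z ih =>
    rw [lps]
    split
    · exact List.cons_ne_nil a z
    · rename_i hnp
      apply ih
      rintro rfl
      exact hnp (by simp)

theorem longestPalSuffix_iff {q z : List A} : LongestPalSuffix q z ↔ q = lps z := by
  constructor
  · rintro ⟨hsuf, hpal, hmax⟩
    have h1 : q.length ≤ (lps z).length := lps_longest z hsuf hpal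
    have h2 : (lps z).length ≤ q.length := hmax _ (lps_suffix z) (lps_pal z)
    exact (suffix_of_suffix_length_le hsuf (lps_suffix z) h1).eq_of_length (le_antisymm h1 h2)
  · rintro rfl
    exact ⟨lps_suffix z, lps_pal z, fun t h1 h2 => lps_longest z h1 h2⟩

/-- longest palindromic prefix -/
def lpp (z : List A) : List A := (lps z.reverse).reverse

theorem lpp_eq_lps_reverse (z : List A) : lpp z = lps z.reverse := lps_pal z.reverse

theorem lpp_pal (z : List A) : (lpp z).reverse = lpp z := by
  rw [lpp_eq_lps_reverse]; exact lps_pal _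

theorem lpp_prefix (z : List A) : lpp z <+: z := by
  rw [lpp_eq_lps_reverse, ← List.reverse_suffix, lps_pal]
  exact lps_suffix _

theorem lpp_longest {t : List A} (z : List A) (hpre : t <+: z) (hpal : t.reverse = t) :
    t.length ≤ (lpp z).length := by
  rw [lpp_eq_lps_reverse]
  have : t <:+ z.reverse := by rw [← hpal]; exact List.reverse_suffix.2 hpre
  simpa using lps_longest z.reverse this hpal

theorem lpp_eq_of_pal {z : List A} (h : z.reverse = z) : lpp z = z := by
  rw [lpp_eq_lps_reverse, h, lps_eq_of_pal h]

theorem lpp_ne_nil {z : List A} (h : z ≠ []) : lpp z ≠ [] := by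
  rw [lpp_eq_lps_reverse]
  exact lps_ne_nil (by simpa using h)

theorem longestPalPrefix_iff {p z : List A} : LongestPalPrefix p z ↔ p = lpp z := by
  constructor
  · rintro ⟨hpre, hpal, hmax⟩
    have h1 : p.length ≤ (lpp z).length := lpp_longest z hpre hpal
    have h2 : (lpp z).length ≤ p.length := hmax _ (lpp_prefix z) (lpp_pal z)
    exact (List.prefix_of_prefix_length_le hpre (lpp_prefix z) h1).eq_of_length
      (le_antisymm h1 h2)
  · rintro rfl
    exact ⟨lpp_prefix z, lpp_pal z, fun t h1 h2 => lpp_longest z h1 h2⟩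

theorem lps_reverse_eq_lpp (z : List A) : lps z.reverse = lpp z := (lpp_eq_lps_reverse z).symm

theorem lpp_reverse_eq_lps (z : List A) : lpp z.reverse = lps z := by
  rw [lpp_eq_lps_reverse, List.reverse_reverse]

theorem exists_take_end {s w : List A} (h : s <:+: w) :
    ∃ k, k ≤ w.length ∧ s <:+ w.take k := by
  obtain ⟨t, h1, h2⟩ := List.infix_iff_suffix_prefix.1 h
  refine ⟨t.length, h2.length_le, ?_⟩
  rwa [← List.prefix_iff_eq_take.1 h2]

/-- segment lemma -/
theorem segment_lemma {y x z : List A} {k : ℕ} (hy : y <+: x) (hx : x <:+ z.take k)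
    (hk : k ≤ z.length) : y <:+ z.take (k - x.length + y.length) := by
  obtain ⟨a, ha⟩ := hx
  have hlen : (z.take k).length = k := by simp [length_take]; omega
  have hax : a.length + x.length = k := by rw [← hlen, ← ha]; simp
  have hyx : y.length ≤ x.length := hy.length_le
  obtain ⟨y', hy'⟩ := hy
  have h1 : z.take (k - x.length + y.length) = (z.take k).take (a.length + y.length) := by
    rw [take_take, Nat.min_eq_left (by omega)]
    congr 1
    omega
  rw [h1, ← ha, take_length_add_append, ← hy', take_left]
  exact ⟨a, rfl⟩

theorem mem_palFactors {x w : List A} :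
    x ∈ palFactors w ↔ x <:+: w ∧ x.reverse = x := by
  rw [palFactors, mem_toFinset, mem_filter, mem_flatMap]
  simp only [mem_inits, mem_tails, decide_eq_true_eq]
  constructor
  · rintro ⟨⟨t, h1, h2⟩, h3⟩
    exact ⟨List.infix_iff_suffix_prefix.2 ⟨t, h2, h1⟩, h3⟩
  · rintro ⟨h1, h3⟩
    obtain ⟨t, h2, h1⟩ := List.infix_iff_suffix_prefix.1 h1
    exact ⟨⟨t, h1, h2⟩, h3⟩

/-- minimal prefix ending with a palindromic factor has it as lps -/
theorem exists_prefix_lps_eq {s w : List A} (hpal : s.reverse = s) (hinf : s <:+: w) :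
    ∃ P, P <+: w ∧ s <:+ P ∧ lps P = s := by
  obtain ⟨k₀, hk₀, hs₀⟩ := exists_take_end hinf
  have hex : ∃ k, s <:+ w.take k := ⟨k₀, hs₀⟩
  set k := Nat.find hex with hkdef
  have hk : s <:+ w.take k := Nat.find_spec hex
  have hkle : k ≤ w.length := le_trans (Nat.find_min' hex hs₀) hk₀
  refine ⟨w.take k, take_prefix _ _, hk, ?_⟩
  set t := lps (w.take k) with htdef
  have hts : t <:+ w.take k := lps_suffix _
  have h1 : s.length ≤ t.length := lps_longest _ hk hpal
  rcases le_or_gt t.length s.length with h2 | h2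
  · exact (suffix_of_suffix_length_le hts hk h2).eq_of_length (le_antisymm h2 h1)
  · exfalso
    have hst : s <:+ t := suffix_of_suffix_length_le hk hts h1
    have hsp : s <+: t := pal_suffix_prefix hpal (lps_pal _) hst
    have hseg : s <:+ w.take (k - t.length + s.length) := segment_lemma hsp hts hkle
    have htk : t.length ≤ k := by
      have := hts.length_le
      simp [length_take] at this
      omega
    exact Nat.find_min hex (by omega) hseg

theorem palFactors_eq_image (w : List A) :
    palFactors w = (w.inits.map lps).toFinset := by
  ext x
  rw [mem_palFactors, mem_toFinset, List.mem_map]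
  constructor
  · rintro ⟨hinf, hpal⟩
    obtain ⟨P, hP, _, hlps⟩ := exists_prefix_lps_eq hpal hinf
    exact ⟨P, (mem_inits _ _).2 hP, hlps⟩
  · rintro ⟨P, hP, rfl⟩
    refine ⟨((lps_suffix P).isInfix).trans ((mem_inits _ _).1 hP).isInfix, lps_pal P⟩

theorem card_palFactors_le (w : List A) : (palFactors w).card ≤ w.length + 1 := by
  rw [palFactors_eq_image]
  calc (w.inits.map lps).toFinset.card ≤ (w.inits.map lps).length := toFinset_card_le _
    _ = w.length + 1 := by rw [length_map, length_inits]

theorem nodup_inits (w : List A) : w.inits.Nodup := by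
  induction w with
  | nil => simp
  | cons a w ih =>
    rw [inits_cons]
    refine List.Nodup.cons ?_ (ih.map (fun x y h => by injection h))
    simp only [List.mem_map]
    rintro ⟨x, -, h⟩
    exact List.cons_ne_nil a x h

theorem rich_iff_inj {w : List A} :
    Rich w ↔ ∀ P₁ P₂ : List A, P₁ <+: w → P₂ <+: w → lps P₁ = lps P₂ → P₁ = P₂ := by
  rw [Rich, palFactors_eq_image]
  constructor
  · intro hcard P₁ P₂ h1 h2 heq
    have hlen : (w.inits.map lps).length = w.length + 1 := by rw [length_map, length_inits]
    have hnodup : (w.inits.map lps).Nodup := by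
      have h3 : (w.inits.map lps).dedup.length = (w.inits.map lps).length := by
        rw [← List.card_toFinset, hcard, hlen]
      exact List.dedup_eq_self.1 ((dedup_sublist _).eq_of_length h3)
    exact inj_on_of_nodup_map hnodup ((mem_inits _ _).2 h1) ((mem_inits _ _).2 h2) heq
  · intro hinj
    have hnodup : (w.inits.map lps).Nodup := by
      rw [nodup_map_iff_inj_on (nodup_inits w)]
      intro x hx y hy hxy
      exact hinj x y ((mem_inits _ _).1 hx) ((mem_inits _ _).1 hy) hxy
    rw [toFinset_card_of_nodup hnodup, length_map, length_inits]

theorem rich_nil : Rich ([] : List A) := by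
  simp [Rich, palFactors_eq_image]

theorem rich_prefix {w P : List A} (hw : Rich w) (hP : P <+: w) : Rich P := by
  rw [rich_iff_inj] at hw ⊢
  intro P₁ P₂ h1 h2 heq
  exact hw P₁ P₂ (h1.trans hP) (h2.trans hP) heq

theorem rich_cons_tail {a : A} {w : List A} (hw : Rich (a :: w)) : Rich w := by
  have hsub : palFactors w ⊆ palFactors (a :: w) := by
    intro x hx
    rw [mem_palFactors] at hx ⊢
    exact ⟨infix_cons hx.1, hx.2⟩
  set D := palFactors (a :: w) \ palFactors w with hD
  have hDmem : ∀ x ∈ D, x <+: (a :: w) ∧ x ≠ [] ∧ x.reverse = x := by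
    intro x hx
    rw [hD, Finset.mem_sdiff, mem_palFactors, mem_palFactors] at hx
    obtain ⟨⟨hinf, hpal⟩, hnot⟩ := hx
    have hne : x ≠ [] := by rintro rfl; exact hnot ⟨nil_infix, by simp⟩
    obtain ⟨s, t, hst⟩ := hinf
    cases s with
    | nil => exact ⟨⟨t, by simpa using hst⟩, hne, hpal⟩
    | cons b s' =>
      exfalso
      apply hnot
      refine ⟨⟨s', t, ?_⟩, hpal⟩
      have := hst
      simp only [cons_append] at this
      injection this with _ h2
  have haux : ∀ x ∈ D, ∀ y ∈ D, x.length < y.length → False := by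
    intro x hx y hy hlt
    obtain ⟨hxp, hxne, hxpal⟩ := hDmem x hx
    obtain ⟨hyp, hyne, hypal⟩ := hDmem y hy
    have hxy : x <+: y := prefix_of_prefix_length_le hxp hyp (le_of_lt hlt)
    have hxs : x <:+ y := pal_prefix_suffix hxpal hypal hxy
    obtain ⟨b, y', rfl⟩ : ∃ b y', y = b :: y' := by
      cases y with
      | nil => exact absurd rfl hyne
      | cons b y' => exact ⟨b, y', rfl⟩
    have hxy' : x <:+ y' := by
      rcases suffix_cons_iff.1 hxs with h | h
      · exfalso; rw [h] at hlt; exact lt_irrefl _ hlt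
      · exact h
    have hy'w : y' <+: w := ((cons_prefix_cons).1 hyp).2
    have : x ∈ palFactors w := mem_palFactors.2 ⟨hxy'.isInfix.trans hy'w.isInfix, hxpal⟩
    rw [hD, Finset.mem_sdiff] at hx
    exact hx.2 this
  have hcard : D.card ≤ 1 := by
    rw [Finset.card_le_one]
    intro x hx y hy
    by_contra hne
    rcases lt_trichotomy x.length y.length with h | h | h
    · exact haux x hx y hy h
    · obtain ⟨hxp, _, _⟩ := hDmem x hx
      obtain ⟨hyp, _, _⟩ := hDmem y hy
      exact hne ((prefix_of_prefix_length_le hxp hyp (le_of_eq h)).eq_of_length h)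
    · exact haux y hy x hx h
  have h1 : (palFactors (a :: w)).card ≤ D.card + (palFactors w).card :=
    Finset.card_le_card_sdiff_add_card
  have h2 := card_palFactors_le w
  have h3 := hw
  rw [Rich] at h3 ⊢
  simp only [length_cons] at h3
  omega

theorem rich_tail {w : List A} (hw : Rich w) : Rich w.tail := by
  cases w with
  | nil => exact hw
  | cons a w => exact rich_cons_tail hw

theorem rich_drop {w : List A} (hw : Rich w) (n : ℕ) : Rich (w.drop n) := by
  induction n with
  | zero => simpa using hw
  | succ n ih =>
    have : w.drop (n + 1) = (w.drop n).tail := by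
      rw [← drop_one, drop_drop]
    rw [this]
    exact rich_tail ih

theorem rich_infix {w u : List A} (hw : Rich w) (hu : u <:+: w) : Rich u := by
  obtain ⟨t, h2, h1⟩ := List.infix_iff_suffix_prefix.1 hu
  have ht : Rich t := rich_prefix hw h1
  have : u = t.drop (t.length - u.length) := suffix_iff_eq_drop.1 h2
  rw [this]
  exact rich_drop ht _

theorem palFactors_reverse (w : List A) : palFactors w.reverse = palFactors w := by
  ext x
  rw [mem_palFactors, mem_palFactors]
  constructor
  · rintro ⟨h1, h2⟩
    refine ⟨?_, h2⟩
    have := List.reverse_infix.2 h1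
    rwa [h2, List.reverse_reverse] at this
  · rintro ⟨h1, h2⟩
    refine ⟨?_, h2⟩
    have : x.reverse <:+: w.reverse := List.reverse_infix.2 h1
    rwa [h2] at this

theorem rich_reverse {w : List A} (hw : Rich w) : Rich w.reverse := by
  rw [Rich, palFactors_reverse, length_reverse]
  exact hw

theorem tail_reverse (z : List A) : z.tail.reverse = z.reverse.dropLast := by
  have h := List.tail_reverse (l := z.reverse)
  rw [List.reverse_reverse] at h
  rw [h, List.reverse_reverse]

/-- unioccurrence of the longest palindromic suffix in a rich word -/
theorem unio_lps {z : List A} (hz : Rich z) (hne : z ≠ []) : ¬ (lps z <:+: z.dropLast) := by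
  intro h
  obtain ⟨P, hP, _, hlps⟩ := exists_prefix_lps_eq (lps_pal z) h
  have hPz : P = z := (rich_iff_inj.1 hz) P z (hP.trans (dropLast_prefix z)) (prefix_refl z) hlps
  have h1 : P.length ≤ z.dropLast.length := hP.length_le
  rw [hPz, length_dropLast] at h1
  have : 0 < z.length := length_pos_iff.2 hne
  omega

theorem unio_lpp {z : List A} (hz : Rich z) (hne : z ≠ []) : ¬ (lpp z <:+: z.tail) := by
  intro h
  have h1 : (lpp z).reverse <:+: z.tail.reverse := List.reverse_infix.2 h
  rw [lpp_pal, tail_reverse, lpp_eq_lps_reverse] at h1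
  exact unio_lps (rich_reverse hz) (by simpa using hne) h1

/-- two factors, one inside the other, same longest palindromic prefix and suffix: equal -/
theorem eq_of_infix_same_pals {w u v : List A} (hw : Rich w) (hv : v <:+: w)
    (huv : u <:+: v) (hp : lpp u = lpp v) (hq : lps u = lps v) : u = v := by
  have hrv : Rich v := rich_infix hw hv
  obtain ⟨x, y, hxy⟩ := huv
  cases x with
  | cons b x' =>
    exfalso
    have hvne : v ≠ [] := by rw [← hxy]; simp
    apply unio_lpp hrv hvne
    have htail : v.tail = x' ++ u ++ y := by rw [← hxy]; simp
    rw [← hp, htail]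
    exact (lpp_prefix u).isInfix.trans ⟨x', y, rfl⟩
  | nil =>
    simp only [nil_append] at hxy
    cases y with
    | nil => simpa using hxy
    | cons c y' =>
      exfalso
      have hvne : v ≠ [] := by rw [← hxy]; simp
      apply unio_lps hrv hvne
      have hdl : v.dropLast = u ++ (c :: y').dropLast := by
        rw [← hxy, dropLast_append]
        simp
      rw [← hq, hdl]
      exact (lps_suffix u).isInfix.trans ⟨[], (c :: y').dropLast, by simp⟩

theorem take_drop_swap (n m : ℕ) (l : List A) :
    (l.drop n).take m = (l.take (n + m)).drop n := by
  rw [drop_take, Nat.add_sub_cancel_left]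

/-- The backward direction: determination implies richness -/
theorem rich_of_determined {w : List A}
    (hdet : ∀ u v p q : List A, u <:+: w → v <:+: w →
      LongestPalPrefix p u → LongestPalPrefix p v →
      LongestPalSuffix q u → LongestPalSuffix q v → u = v) : Rich w := by
  rw [rich_iff_inj]
  have haux : ∀ P₁ P₂ : List A, P₁ <+: w → P₂ <+: w → lps P₁ = lps P₂ →
      P₁.length < P₂.length → False := by
    intro P₁ P₂ h1 h2 heq hlt
    set s := lps P₂ with hs
    have hP1ne : P₁ ≠ [] := by
      rintro rfl
      simp only [lps_nil] at heq
      have : P₂ = [] := by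
        by_contra hc
        exact lps_ne_nil hc heq.symm
      rw [this] at hlt
      simp at hlt
    have hsne : s ≠ [] := by
      exact heq ▸ lps_ne_nil hP1ne
    have h12 : P₁ <+: P₂ := prefix_of_prefix_length_le h1 h2 (le_of_lt hlt)
    have hP1take : P₁ = P₂.take P₁.length := prefix_iff_eq_take.1 h12
    have hsP1 : s <:+ P₂.take P₁.length := by
      rw [← hP1take]
      exact heq ▸ lps_suffix P₁
    set pred := fun k => s <:+ P₂.take k with hpred
    set k := Nat.findGreatest pred (P₂.length - 1) with hk
    have hP1le : P₁.length ≤ P₂.length - 1 := by omega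
    have hkspec : pred k := Nat.findGreatest_spec hP1le hsP1
    have hkub : k ≤ P₂.length - 1 := Nat.findGreatest_le _
    have hsk : s.length ≤ k := by
      have := hkspec.length_le
      simp only [length_take] at this
      omega
    have hkP2 : k < P₂.length := by omega
    set r := P₂.drop (k - s.length) with hr
    have hrlen : r.length = P₂.length - k + s.length := by
      rw [hr, length_drop]; omega
    have hrsuf : r <:+ P₂ := drop_suffix _ _
    -- s is a prefix of r
    have hspre : s <+: r := by
      rw [prefix_iff_eq_take]
      obtain ⟨a, ha⟩ := hkspec
      have halen : a.length = k - s.length := by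
        have : (P₂.take k).length = k := by simp [length_take]; omega
        rw [← ha] at this
        simp only [length_append] at this
        omega
      rw [hr, take_drop_swap]
      have : k - s.length + s.length = k := by omega
      rw [this, ← ha, ← halen, drop_left]
    -- s is a suffix of r
    have hssuf : s <:+ r :=
      suffix_of_suffix_length_le (hs ▸ lps_suffix P₂) hrsuf (by omega)
    have hslt : s.length < r.length := by omega
    -- lps r = s
    have hlpsr : lps r = s := by
      have ha1 : s.length ≤ (lps r).length := lps_longest r hssuf (hs ▸ lps_pal P₂)
      have ha2 : (lps r).length ≤ s.length := by
        rw [hs]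
        exact lps_longest P₂ ((lps_suffix r).trans hrsuf) (lps_pal r)
      exact ((suffix_of_suffix_length_le (lps_suffix r) hssuf ha2).eq_of_length
        (le_antisymm ha2 ha1))
    -- lpp r = s
    have hlppr : lpp r = s := by
      set t := lpp r with ht
      have hb1 : s.length ≤ t.length := lpp_longest r hspre (hs ▸ lps_pal P₂)
      have htner : t ≠ r := by
        intro hc
        have : lps r = r := lps_eq_of_pal (by rw [← hc]; exact lpp_pal r)
        rw [hlpsr] at this
        rw [← this] at hslt
        exact lt_irrefl _ hslt
      have htltr : t.length < r.length :=
        lt_of_le_of_ne (lpp_prefix r).length_le (fun hc => htner ((lpp_prefix r).eq_of_length hc))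
      by_contra hne
      have hb2 : s.length < t.length := by
        rcases lt_or_eq_of_le hb1 with h | h
        · exact h
        · exact absurd ((prefix_of_prefix_length_le (lpp_prefix r) hspre
            (le_of_eq h.symm)).eq_of_length h.symm) hne
      -- s is a suffix of t, so s occurs ending at position (k - |s|) + |t| in P₂
      have hst : s <:+ t := pal_prefix_suffix (hs ▸ lps_pal P₂) (lpp_pal r)
        (prefix_of_prefix_length_le hspre (lpp_prefix r) (le_of_lt hb2))
      have httake : t = r.take t.length := prefix_iff_eq_take.1 (lpp_prefix r)
      have hseg : s <:+ P₂.take (k - s.length + t.length) := by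
        have h1' : s <:+ (P₂.take (k - s.length + t.length)).drop (k - s.length) := by
          rw [← take_drop_swap, ← hr, ← httake]
          exact hst
        exact h1'.trans (drop_suffix _ _)
      have hm1 : k < k - s.length + t.length := by omega
      have hm2 : k - s.length + t.length ≤ P₂.length - 1 := by omega
      exact Nat.findGreatest_is_greatest hm1 hm2 hseg
    -- apply determination to r and s
    have hrw : r <:+: w := hrsuf.isInfix.trans h2.isInfix
    have hsw : s <:+: w := (hs ▸ (lps_suffix P₂).isInfix).trans h2.isInfix
    have hspal : s.reverse = s := hs ▸ lps_pal P₂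
    have := hdet r s s s hrw hsw
      (longestPalPrefix_iff.2 hlppr.symm) (longestPalPrefix_iff.2 (lpp_eq_of_pal hspal).symm)
      (longestPalSuffix_iff.2 hlpsr.symm) (longestPalSuffix_iff.2 (lps_eq_of_pal hspal).symm)
    rw [this] at hslt
    exact lt_irrefl _ hslt
  intro P₁ P₂ h1 h2 heq
  rcases lt_trichotomy P₁.length P₂.length with h | h | h
  · exact absurd (haux P₁ P₂ h1 h2 heq h) (fun hc => hc)
  · exact (prefix_of_prefix_length_le h1 h2 (le_of_eq h)).eq_of_length h
  · exact absurd (haux P₂ P₁ h2 h1 heq.symm h) (fun hc => hc)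

theorem suffix_or_suffix_of_suffix {a b l : List A} (h1 : a <:+ l) (h2 : b <:+ l) :
    a <:+ b ∨ b <:+ a := by
  rcases le_total a.length b.length with h | h
  · exact Or.inl (suffix_of_suffix_length_le h1 h2 h)
  · exact Or.inr (suffix_of_suffix_length_le h2 h1 h)

/-- Key lemma: the first occurrence of a factor z of a rich word either ends where the
first occurrence of its longest palindromic suffix ends, or z.reverse occurs earlier. -/
theorem first_occ_dichotomy {w z q' : List A} (hw : Rich w) (hz : z <:+: w) (hne : z ≠ [])
    (hq_eq : lps z = q')
    (h : ∃ k, z <:+ w.take k) (hq : ∃ k, q' <:+ w.take k) :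
    Nat.find h = Nat.find hq ∨
    ∃ (h' : ∃ k, z.reverse <:+ w.take k), Nat.find h' < Nat.find h := by
  set k := Nat.find h with hkdef
  have hk : z <:+ w.take k := Nat.find_spec h
  obtain ⟨k₀, hk₀le, hk₀⟩ := exists_take_end hz
  have hkle : k ≤ w.length := le_trans (Nat.find_min' h hk₀) hk₀le
  have hzk : z.length ≤ k := by
    have := hk.length_le
    simp only [length_take] at this
    omega
  have hPlen : (w.take k).length = k := by simp [length_take]; omega
  have hPrich : Rich (w.take k) := rich_prefix hw (take_prefix _ _)
  set s := lps (w.take k) with hsdef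
  have hsP : s <:+ w.take k := lps_suffix _
  have hq0 : q' <:+ w.take k := (hq_eq ▸ lps_suffix z).trans hk
  have hq0' : q'.length ≤ s.length := lps_longest _ hq0 (hq_eq ▸ lps_pal z)
  rcases le_or_gt s.length z.length with hcase | hcase
  · -- s = q', and k is the first occurrence of q'
    left
    have hsz : s <:+ z := suffix_of_suffix_length_le hsP hk hcase
    have h1 : s.length ≤ q'.length := hq_eq ▸ lps_longest z hsz (lps_pal _)
    have hs_eq : s = q' := by
      have h2 : s <:+ q' :=
        suffix_of_suffix_length_le hsz (hq_eq ▸ lps_suffix z) (hq_eq ▸ h1)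
      exact h2.eq_of_length (le_antisymm h1 hq0')
    have hle1 : Nat.find hq ≤ k := Nat.find_min' hq hq0
    rcases lt_or_eq_of_le hle1 with hlt | heq2
    · exfalso
      set k' := Nat.find hq with hk'def
      have hk' : q' <:+ w.take k' := Nat.find_spec hq
      apply unio_lps hPrich (by intro hc; rw [hc] at hPlen; simp at hPlen; omega)
      have hdl : (w.take k).dropLast = w.take (k - 1) := by
        rw [dropLast_eq_take, hPlen, take_take, Nat.min_eq_left (by omega)]
      have hpre : w.take k' <+: w.take (k - 1) := by
        rw [show w.take k' = (w.take (k-1)).take k' by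
          rw [take_take, Nat.min_eq_left (by omega)]]
        exact take_prefix _ _
      rw [hdl, ← hsdef, hs_eq]
      exact hk'.isInfix.trans hpre.isInfix
    · exact heq2.symm
  · -- z is a proper suffix of the palindrome s : reflect
    right
    have hzs : z <:+ s := suffix_of_suffix_length_le hk hsP (le_of_lt hcase)
    have hzrev : z.reverse <+: s := by
      have := List.reverse_prefix.2 hzs
      rwa [lps_pal] at this
    have hseg : z.reverse <:+ w.take (k - s.length + z.reverse.length) :=
      segment_lemma hzrev hsP hkle
    have hsk : s.length ≤ k := by
      have := hsP.length_le
      omega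
    refine ⟨⟨_, hseg⟩, ?_⟩
    calc Nat.find ⟨_, hseg⟩ ≤ k - s.length + z.reverse.length := Nat.find_min' _ hseg
      _ < k := by rw [length_reverse]; omega

theorem first_occ_main {w z q' p' : List A} (hw : Rich w) (hz : z <:+: w) (hne : z ≠ [])
    (hq_eq : lps z = q') (hp_eq : lps z.reverse = p')
    (h : ∃ k, z <:+ w.take k) (hq : ∃ k, q' <:+ w.take k) (hp : ∃ k, p' <:+ w.take k) :
    Nat.find h = Nat.find hq ∨
    ∃ (h' : ∃ k, z.reverse <:+ w.take k), Nat.find h' = Nat.find hp := by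
  rcases first_occ_dichotomy hw hz hne hq_eq h hq with h1 | ⟨h', hlt⟩
  · exact Or.inl h1
  · right
    refine ⟨h', ?_⟩
    have hzrev_inf : z.reverse <:+: w :=
      (Nat.find_spec h').isInfix.trans (take_prefix _ _).isInfix
    have hzrev_ne : z.reverse ≠ [] := by simpa using hne
    rcases first_occ_dichotomy hw hzrev_inf hzrev_ne hp_eq h' hp with h2 | ⟨h'', hlt2⟩
    · exact h2
    · exfalso
      obtain ⟨n, hn_lt, hnspec⟩ : ∃ n, n < Nat.find h' ∧ z.reverse.reverse <:+ w.take n :=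
        ⟨_, hlt2, Nat.find_spec h''⟩
      rw [List.reverse_reverse] at hnspec
      have : Nat.find h ≤ n := Nat.find_min' h hnspec
      omega

/-- the contradiction in the mixed case -/
theorem mixed_case {w u v p q : List A} (hw : Rich w)
    (hpu : p <+: u) (hqv : q <:+ v) (hqpal : q.reverse = q)
    (hplt : p.length < u.length) (hqlt : q.length < v.length)
    (hq : ∃ k, q <:+ w.take k) (hp : ∃ k, p <:+ w.take k)
    (hkqle : Nat.find hq ≤ w.length) (hkple : Nat.find hp ≤ w.length)
    (h1 : u <:+ w.take (Nat.find hq)) (h2 : v.reverse <:+ w.take (Nat.find hp)) : False := by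
  set kq := Nat.find hq with hkq
  set kp := Nat.find hp with hkp
  have hule : u.length ≤ kq := by
    have := h1.length_le
    simp only [length_take] at this
    omega
  have hvle : v.length ≤ kp := by
    have := h2.length_le
    simp only [length_take, length_reverse] at this
    omega
  have hseg1 : p <:+ w.take (kq - u.length + p.length) := segment_lemma hpu h1 hkqle
  have hle1 : kp ≤ kq - u.length + p.length := Nat.find_min' hp hseg1
  have hqvrev : q <+: v.reverse := by
    have := List.reverse_prefix.2 hqv
    rwa [hqpal] at this
  have hseg2 : q <:+ w.take (kp - v.reverse.length + q.length) := segment_lemma hqvrev h2 hkple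
  have hle2 : kq ≤ kp - v.reverse.length + q.length := Nat.find_min' hq hseg2
  rw [length_reverse] at hle2
  omega

/-- The forward direction: richness implies determination -/
theorem determined_of_rich {w : List A} (hw : Rich w) :
    ∀ u v p q : List A, u <:+: w → v <:+: w →
      LongestPalPrefix p u → LongestPalPrefix p v →
      LongestPalSuffix q u → LongestPalSuffix q v → u = v := by
  intro u v p q hu hv hpu hpv hqu hqv
  have hpu' : lpp u = p := (longestPalPrefix_iff.1 hpu).symm
  have hpv' : lpp v = p := (longestPalPrefix_iff.1 hpv).symm
  have hqu' : lps u = q := (longestPalSuffix_iff.1 hqu).symm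
  have hqv' : lps v = q := (longestPalSuffix_iff.1 hqv).symm
  by_contra hne
  by_cases hpal_u : u.reverse = u
  · have hpeq : p = u := by rw [← hpu', lpp_eq_of_pal hpal_u]
    have huv : u <:+: v := (hpeq ▸ hpv.1).isInfix
    exact hne (eq_of_infix_same_pals hw hv huv (hpu'.trans hpv'.symm) (hqu'.trans hqv'.symm))
  by_cases hpal_v : v.reverse = v
  · have hpeq : p = v := by rw [← hpv', lpp_eq_of_pal hpal_v]
    have hvu : v <:+: u := (hpeq ▸ hpu.1).isInfix
    exact hne (eq_of_infix_same_pals hw hu hvu (hpv'.trans hpu'.symm)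
      (hqv'.trans hqu'.symm)).symm
  have hune : u ≠ [] := by rintro rfl; exact hpal_u rfl
  have hvne : v ≠ [] := by rintro rfl; exact hpal_v rfl
  have hppal : p.reverse = p := hpu.2.1
  have hqpal : q.reverse = q := hqu.2.1
  have hplt_u : p.length < u.length := by
    rcases lt_or_eq_of_le hpu.1.length_le with h | h
    · exact h
    · exfalso; apply hpal_u
      have he : p = u := hpu.1.eq_of_length h
      rw [← he]; exact hppal
  have hplt_v : p.length < v.length := by
    rcases lt_or_eq_of_le hpv.1.length_le with h | h
    · exact h
    · exfalso; apply hpal_v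
      have he : p = v := hpv.1.eq_of_length h
      rw [← he]; exact hppal
  have hqlt_u : q.length < u.length := by
    rcases lt_or_eq_of_le hqu.1.length_le with h | h
    · exact h
    · exfalso; apply hpal_u
      have he : q = u := hqu.1.eq_of_length h
      rw [← he]; exact hqpal
  have hqlt_v : q.length < v.length := by
    rcases lt_or_eq_of_le hqv.1.length_le with h | h
    · exact h
    · exfalso; apply hpal_v
      have he : q = v := hqv.1.eq_of_length h
      rw [← he]; exact hqpal
  have hq_inf : q <:+: w := hqu.1.isInfix.trans hu
  have hp_inf : p <:+: w := hpu.1.isInfix.trans hu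
  obtain ⟨kq0, hkq0le, hkq0⟩ := exists_take_end hq_inf
  obtain ⟨kp0, hkp0le, hkp0⟩ := exists_take_end hp_inf
  have hq_ex : ∃ k, q <:+ w.take k := ⟨kq0, hkq0⟩
  have hp_ex : ∃ k, p <:+ w.take k := ⟨kp0, hkp0⟩
  have hkqle : Nat.find hq_ex ≤ w.length := le_trans (Nat.find_min' _ hkq0) hkq0le
  have hkple : Nat.find hp_ex ≤ w.length := le_trans (Nat.find_min' _ hkp0) hkp0le
  obtain ⟨ku0, hku0le, hku0⟩ := exists_take_end hu
  obtain ⟨kv0, hkv0le, hkv0⟩ := exists_take_end hv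
  have hu_ex : ∃ k, u <:+ w.take k := ⟨ku0, hku0⟩
  have hv_ex : ∃ k, v <:+ w.take k := ⟨kv0, hkv0⟩
  have hpu_rev : lps u.reverse = p := by rw [lps_reverse_eq_lpp, hpu']
  have hpv_rev : lps v.reverse = p := by rw [lps_reverse_eq_lpp, hpv']
  have hmainu := first_occ_main hw hu hune hqu' hpu_rev hu_ex hq_ex hp_ex
  have hmainv := first_occ_main hw hv hvne hqv' hpv_rev hv_ex hq_ex hp_ex
  rcases hmainu with hU | ⟨hU', hUeq⟩ <;> rcases hmainv with hV | ⟨hV', hVeq⟩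
  · -- both u and v end at the first occurrence of q
    have h1 : u <:+ w.take (Nat.find hq_ex) := hU ▸ Nat.find_spec hu_ex
    have h2 : v <:+ w.take (Nat.find hq_ex) := hV ▸ Nat.find_spec hv_ex
    rcases suffix_or_suffix_of_suffix h1 h2 with hcmp | hcmp
    · exact hne (eq_of_infix_same_pals hw hv hcmp.isInfix (hpu'.trans hpv'.symm)
        (hqu'.trans hqv'.symm))
    · exact hne (eq_of_infix_same_pals hw hu hcmp.isInfix (hpv'.trans hpu'.symm)
        (hqv'.trans hqu'.symm)).symm
  · -- mixed : u of q-type, v of p-type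
    have h1 : u <:+ w.take (Nat.find hq_ex) := hU ▸ Nat.find_spec hu_ex
    have h2 : v.reverse <:+ w.take (Nat.find hp_ex) := hVeq ▸ Nat.find_spec hV'
    exact mixed_case hw hpu.1 hqv.1 hqpal hplt_u hqlt_v hq_ex hp_ex hkqle hkple h1 h2
  · -- mixed : v of q-type, u of p-type
    have h1 : v <:+ w.take (Nat.find hq_ex) := hV ▸ Nat.find_spec hv_ex
    have h2 : u.reverse <:+ w.take (Nat.find hp_ex) := hUeq ▸ Nat.find_spec hU'
    exact mixed_case hw hpv.1 hqu.1 hqpal hplt_v hqlt_u hq_ex hp_ex hkqle hkple h1 h2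
  · -- both u.reverse and v.reverse end at the first occurrence of p
    have h1 : u.reverse <:+ w.take (Nat.find hp_ex) := hUeq ▸ Nat.find_spec hU'
    have h2 : v.reverse <:+ w.take (Nat.find hp_ex) := hVeq ▸ Nat.find_spec hV'
    have hlpp_eq : lpp u.reverse = lpp v.reverse := by
      rw [lpp_reverse_eq_lps, lpp_reverse_eq_lps, hqu', hqv']
    have hlps_eq : lps u.reverse = lps v.reverse := by
      rw [lps_reverse_eq_lpp, lps_reverse_eq_lpp, hpu', hpv']
    have hurev_inf : u.reverse <:+: w := h1.isInfix.trans (take_prefix _ _).isInfix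
    have hvrev_inf : v.reverse <:+: w := h2.isInfix.trans (take_prefix _ _).isInfix
    rcases suffix_or_suffix_of_suffix h1 h2 with hcmp | hcmp
    · have := eq_of_infix_same_pals hw hvrev_inf hcmp.isInfix hlpp_eq hlps_eq
      exact hne (by rw [← reverse_reverse u, this, reverse_reverse])
    · have := eq_of_infix_same_pals hw hurev_inf hcmp.isInfix hlpp_eq.symm hlps_eq.symm
      exact hne (by rw [← reverse_reverse u, ← this, reverse_reverse])

end RichProof

/-- A finite word `w` is rich if and only if any two factors `u` and `v` of `w` having
the same longest palindromic prefix and the same longest palindromic suffix are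
equal. -/
theorem rich_iff_factors_determined_by_pal_prefix_suffix {A : Type*} [DecidableEq A]
    (w : List A) :
    Rich w ↔ ∀ u v p q : List A, u <:+: w → v <:+: w →
      LongestPalPrefix p u → LongestPalPrefix p v →
      LongestPalSuffix q u → LongestPalSuffix q v → u = v := by
  constructor
  · exact fun hw => RichProof.determined_of_rich hw
  · exact fun h => RichProof.rich_of_determined h
end

section
/- Let r be a finite word and p a non-empty palindrome such that p is a prefix of r, p is a suffix of r, and |r| ≤ 2|p|. Then r is a palindrome. -/
/-- If `p` is a non-empty palindrome which is both a prefix and a suffix of `r`,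
and `|r| ≤ 2|p|`, then `r` is a palindrome. -/
theorem palindrome_of_overlapping_pal_prefix_suffix {A : Type*}
    (r p : List A) (hne : p ≠ []) (hpal : p.reverse = p)
    (hpre : p <+: r) (hsuf : p <:+ r) (hlen : r.length ≤ 2 * p.length) :
    r.reverse = r := by
  obtain ⟨s, hs⟩ := hpre
  obtain ⟨t, ht⟩ := hsuf
  have hlr : r.length = p.length + s.length := by
    rw [← hs, List.length_append]
  have hlt : t.length + p.length = r.length := by
    rw [← ht, List.length_append]
  have hts : t.reverse = s := by
    have ht' : t = p.take t.length := by
      have : (p ++ s).take t.length = p.take t.length :=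
        List.take_append_of_le_length (by omega)
      rw [hs, ← ht, List.take_left] at this
      exact this
    have hs' : s = p.drop (p.length - t.length) := by
      have : (t ++ p).drop p.length = p.drop (p.length - t.length) := by
        rw [List.drop_append]
        simp [show p.length - t.length ≤ p.length by omega,
          List.drop_eq_nil_of_le (show t.length ≤ p.length by omega)]
      rw [ht, ← hs, List.drop_left] at this
      exact this
    rw [ht', hs', List.reverse_take, hpal]
  rw [← ht, List.reverse_append, hpal, hts, hs, ht]
end

section
/- Let w be a finite word such that any two factors of w having the same longest palindromic prefix and the same longest palindromic suffix are equal. Then for every non-empty palindromic factor p of w, every complete return to p in w is a palindrome. -/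
/-- `r` is a complete return to `u` if `u` is both a prefix and a suffix of `r`
and `r` has exactly two occurrences of `u`. -/
def CompleteReturn {A : Type*} (u r : List A) : Prop :=
  u <+: r ∧ u <:+ r ∧ {st : List A × List A | r = st.1 ++ u ++ st.2}.ncard = 2

/-- An occurrence of `p` in `r` that starts neither at position `0` nor at position
`r.length - p.length` contradicts the "exactly two occurrences" condition. -/
lemma interior_occurrence_false {A : Type*} {p r s t : List A}
    (hcard : {st : List A × List A | r = st.1 ++ p ++ st.2}.ncard = 2)
    (hpref : p <+: r) (hsuf : p <:+ r)
    (hst : r = s ++ p ++ t) (h0 : s ≠ []) (h1 : s.length ≠ r.length - p.length) : False := by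
  obtain ⟨x, y, hxy, hS⟩ := Set.ncard_eq_two.mp hcard
  obtain ⟨t0, ht0⟩ := id hpref
  obtain ⟨s0, hs0⟩ := id hsuf
  have hxS : r = x.1 ++ p ++ x.2 := by
    have : x ∈ {st : List A × List A | r = st.1 ++ p ++ st.2} := by rw [hS]; simp
    exact this
  -- p is strictly shorter than r
  have hplen : p.length < r.length := by
    rcases lt_or_eq_of_le hpref.length_le with h | h
    · exact h
    · exfalso
      have hyS : r = y.1 ++ p ++ y.2 := by
        have : y ∈ {st : List A × List A | r = st.1 ++ p ++ st.2} := by rw [hS]; simp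
        exact this
      have hx1 : x.1 = [] ∧ x.2 = [] := by
        have := congrArg List.length hxS
        simp at this
        constructor <;> [exact List.length_eq_zero_iff.mp (by omega);
          exact List.length_eq_zero_iff.mp (by omega)]
      have hy1 : y.1 = [] ∧ y.2 = [] := by
        have := congrArg List.length hyS
        simp at this
        constructor <;> [exact List.length_eq_zero_iff.mp (by omega);
          exact List.length_eq_zero_iff.mp (by omega)]
      exact hxy (Prod.ext (hx1.1.trans hy1.1.symm) (hx1.2.trans hy1.2.symm))
  have hs0len : s0.length = r.length - p.length := by
    have := congrArg List.length hs0
    simp at this; omega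
  have ha : (([] : List A), t0) ∈ {st : List A × List A | r = st.1 ++ p ++ st.2} := by
    simp [Set.mem_setOf_eq, ← ht0]
  have hb : ((s0, ([] : List A))) ∈ {st : List A × List A | r = st.1 ++ p ++ st.2} := by
    simp [Set.mem_setOf_eq, ← hs0]
  have hc : ((s, t)) ∈ {st : List A × List A | r = st.1 ++ p ++ st.2} := hst
  rw [hS] at ha hb hc
  have hab : (([] : List A), t0) ≠ (s0, ([] : List A)) := by
    intro hh
    have : ([] : List A) = s0 := congrArg Prod.fst hh
    have := congrArg List.length this
    simp at this; omega
  have hac : (([] : List A), t0) ≠ (s, t) := by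
    intro hh
    exact h0 (congrArg Prod.fst hh).symm
  have hbc : ((s0, ([] : List A))) ≠ (s, t) := by
    intro hh
    have : s0 = s := congrArg Prod.fst hh
    have := congrArg List.length this
    omega
  simp only [Set.mem_insert_iff, Set.mem_singleton_iff] at ha hb hc
  rcases ha with ha | ha <;> rcases hb with hb | hb <;> rcases hc with hc | hc <;>
    first
    | exact hab (ha.trans hb.symm)
    | exact hac (ha.trans hc.symm)
    | exact hbc (hb.trans hc.symm)

/-- Let `w` be a finite word such that any two factors of `w` having the same longest
palindromic prefix and the same longest palindromic suffix are equal. Then for every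
non-empty palindromic factor `p` of `w`, every complete return to `p` in `w` is a
palindrome. -/
theorem complete_returns_palindromic_of_unique_determination {A : Type*}
    (w : List A)
    (h : ∀ u v p q : List A, u <:+: w → v <:+: w →
      LongestPalPrefix p u → LongestPalPrefix p v →
      LongestPalSuffix q u → LongestPalSuffix q v → u = v) :
    ∀ p : List A, p <:+: w → p ≠ [] → p.reverse = p →
      ∀ r : List A, r <:+: w → CompleteReturn p r → r.reverse = r := by
  classical
  intro p hpw hpne hppal r hrw hcr
  obtain ⟨hpref, hsuf, hcard⟩ := hcr
  -- the longest palindromic suffix of r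
  set PS : ℕ → Prop := fun n => ∃ q : List A, q <:+ r ∧ q.reverse = q ∧ q.length = n with hPS
  have hPS0 : PS 0 := ⟨[], List.nil_suffix, rfl, rfl⟩
  set N := Nat.findGreatest PS r.length with hN
  have hNspec : PS N := Nat.findGreatest_spec (Nat.zero_le _) hPS0
  obtain ⟨Q, hQsuf, hQpal, hQlen⟩ := hNspec
  have hQmax : ∀ q : List A, q <:+ r → q.reverse = q → q.length ≤ Q.length := by
    intro q hq hqpal
    rw [hQlen]
    exact Nat.le_findGreatest hq.length_le ⟨q, hq, hqpal, rfl⟩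
  -- the longest palindromic prefix of r
  set PP : ℕ → Prop := fun n => ∃ q : List A, q <+: r ∧ q.reverse = q ∧ q.length = n with hPP
  have hPP0 : PP 0 := ⟨[], List.nil_prefix, rfl, rfl⟩
  set M := Nat.findGreatest PP r.length with hM
  have hMspec : PP M := Nat.findGreatest_spec (Nat.zero_le _) hPP0
  obtain ⟨P, hPpre, hPpal, hPlen⟩ := hMspec
  have hPmax : ∀ q : List A, q <+: r → q.reverse = q → q.length ≤ P.length := by
    intro q hq hqpal
    rw [hPlen]
    exact Nat.le_findGreatest hq.length_le ⟨q, hq, hqpal, rfl⟩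
  have hpQ : p.length ≤ Q.length := hQmax p hsuf hppal
  have hpP : p.length ≤ P.length := hPmax p hpref hppal
  -- p is a suffix (hence prefix) of Q
  have hpsQ : p <:+ Q := by
    have h1 : p.reverse <+: r.reverse := List.reverse_prefix.mpr hsuf
    have h2 : Q.reverse <+: r.reverse := List.reverse_prefix.mpr hQsuf
    have h3 := List.prefix_of_prefix_length_le h1 h2 (by simpa using hpQ)
    exact List.reverse_prefix.mp h3
  have hppQ : p <+: Q := by
    rw [← hppal, ← hQpal, List.reverse_prefix]
    exact hpsQ
  -- p is a prefix (hence suffix) of P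
  have hppP : p <+: P := List.prefix_of_prefix_length_le hpref hPpre hpP
  have hpsP : p <:+ P := by
    rw [← hppal, ← hPpal, List.reverse_suffix]
    exact hppP
  by_cases hQr : Q.length = r.length
  · -- Q = r so r is a palindrome
    have : Q = r := hQsuf.eq_of_length hQr
    rw [← this]; exact hQpal
  by_cases hPr : P.length = r.length
  · have : P = r := hPpre.eq_of_length hPr
    rw [← this]; exact hPpal
  -- otherwise Q = p and P = p
  have hQlt : Q.length < r.length := lt_of_le_of_ne hQsuf.length_le hQr
  have hPlt : P.length < r.length := lt_of_le_of_ne hPpre.length_le hPr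
  have hQp : Q = p := by
    rcases lt_or_eq_of_le hpQ with hlt | heq
    · exfalso
      obtain ⟨t1, ht1⟩ := hppQ
      obtain ⟨s1, hs1⟩ := hQsuf
      have hocc : r = s1 ++ p ++ t1 := by rw [← hs1, ← ht1]; simp
      have hs1len : s1.length = r.length - Q.length := by
        have := congrArg List.length hs1; simp at this; omega
      refine interior_occurrence_false hcard hpref hsuf hocc ?_ ?_
      · intro hh; rw [hh] at hs1len; simp only [List.length_nil] at hs1len; omega
      · omega
    · exact (hpsQ.eq_of_length heq).symm
  have hPp : P = p := by
    rcases lt_or_eq_of_le hpP with hlt | heq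
    · exfalso
      obtain ⟨s1, hs1⟩ := hpsP
      obtain ⟨t1, ht1⟩ := hPpre
      have hocc : r = s1 ++ p ++ t1 := by rw [← ht1, ← hs1]
      have hs1len : s1.length = P.length - p.length := by
        have := congrArg List.length hs1; simp at this; omega
      refine interior_occurrence_false hcard hpref hsuf hocc ?_ ?_
      · intro hh; rw [hh] at hs1len; simp only [List.length_nil] at hs1len; omega
      · omega
    · exact (hppP.eq_of_length heq).symm
  -- apply the hypothesis with u = r, v = p
  have hrp : r = p := by
    refine h r p p p hrw hpw ?_ ?_ ?_ ?_
    · exact ⟨hpref, hppal, fun p' hp' hp'pal => hPp ▸ hPmax p' hp' hp'pal⟩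
    · exact ⟨List.prefix_refl p, hppal, fun p' hp' _ => hp'.length_le⟩
    · exact ⟨hsuf, hppal, fun q' hq' hq'pal => hQp ▸ hQmax q' hq' hq'pal⟩
    · exact ⟨List.suffix_refl p, hppal, fun q' hq' _ => hq'.length_le⟩
  rw [hrp]; exact hppal
end
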